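/- The Fourier transform is multiplicative from the convolution product to the ordinary product: F(a * b) = F(a) · F(b) for all a, b ∈ A₋₁,₀, where a * b = w₋₁* a γ(b) w₋₁ and F(a) = γ(w₋₁* a w₁). -/
import Mathlib


/-- The Fourier transform is multiplicative from the convolution
product to the operator product: `F(a * b) = F(a) · F(b)` for `a, b ∈ A₋₁,₀`,
where `a * b = w₋₁* a γ(b) w₋₁` and `F(a) = γ(w₋₁* a w₁)`.
(`wm1 = w₋₁`, `w1 = w₁`.) -/
theorem fourier_transform_multiplicative
    {B : Type*} [Ring B] [StarRing B] [Algebra ℂ B] [StarModule ℂ B]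
    (M N : StarSubalgebra ℂ B) (hNM : N ≤ M)
    (γ : B →⋆ₐ[ℂ] B) (hγM : ∀ m ∈ M, γ m ∈ N)
    (wm1 w1 : B) (hwN : wm1 ∈ N) (hiso : star wm1 * wm1 = 1)
    (hintN : ∀ n ∈ N, wm1 * n = γ n * wm1)
    (hγw1 : γ w1 = wm1) (hiso1 : star w1 * w1 = 1)
    (hintM : ∀ m ∈ M, w1 * m = γ m * w1)
    (hww : wm1 * w1 = w1 * w1) :
    ∀ a ∈ M, (∀ m ∈ M, a * γ m = γ m * a) →
      ∀ b ∈ M, (∀ m ∈ M, b * γ m = γ m * b) →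
        γ (star wm1 * (star wm1 * a * γ b * wm1) * w1)
          = γ (star wm1 * a * w1) * γ (star wm1 * b * w1) := by
  intro a haM haC b hbM hbC
  have hswm : star wm1 ∈ M := star_mem (hNM hwN)
  have h2 : γ b * w1 = w1 * b := (hintM b hbM).symm
  have h3 : star wm1 * star wm1 = star wm1 * star (γ wm1) := by
    have := congrArg star (hintN wm1 hwN)
    simpa [star_mul] using this
  have h4 : ∀ x : B, star (γ wm1) * (a * x) = a * (star (γ wm1) * x) := by
    intro x
    have h := haC (star wm1) hswm
    rw [map_star] at h
    rw [← mul_assoc, ← h, mul_assoc]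
  have h5 : ∀ x : B, star (γ wm1) * (w1 * x) = w1 * (star wm1 * x) := by
    intro x
    have h := hintM (star wm1) hswm
    rw [map_star] at h
    rw [← mul_assoc, ← h, mul_assoc]
  have h3' : ∀ x : B, star wm1 * (star wm1 * x) = star wm1 * (star (γ wm1) * x) := by
    intro x; rw [← mul_assoc, h3, mul_assoc]
  have key : star wm1 * (star wm1 * a * γ b * wm1) * w1
      = (star wm1 * a * w1) * (star wm1 * b * w1) := by
    simp only [mul_assoc]
    rw [hww, ← mul_assoc (γ b) w1 w1, h2, mul_assoc, h3', h4, h5]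
  rw [key, map_mul]
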